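/- Let |Ψ(b)⟩ = Σ_{i=1}^N √(p_b(i)) |i⟩_E |i⟩_A |i⟩_B |ψ_i(b)⟩_{AB} for b ∈ {0,1}, where {|i⟩} are orthonormal. Then F(tr_{AE}|Ψ(0)⟩⟨Ψ(0)|, tr_{AE}|Ψ(1)⟩⟨Ψ(1)|) = F(tr_A|Ψ(0)⟩⟨Ψ(0)|, tr_A|Ψ(1)⟩⟨Ψ(1)|), i.e., the environment copy of the classical record gives Bob no additional distinguishing power. -/

import Mathlib

open scoped BigOperators ComplexOrder

noncomputable section

namespace QBC

/-- Total matrix square root (junk value `0` off the PSD cone). -/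
def msqrt {n : Type*} [Fintype n] [DecidableEq n] (A : Matrix n n ℂ) : Matrix n n ℂ :=
  open scoped Classical in
  if h : A.PosSemidef then
    (h.1.eigenvectorUnitary : Matrix n n ℂ) *
      Matrix.diagonal ((↑) ∘ (Real.sqrt ∘ h.1.eigenvalues)) *
      (star (h.1.eigenvectorUnitary : Matrix n n ℂ))
  else 0

/-- Quantum fidelity `F(ρ,σ) = tr √(√ρ σ √ρ)`. -/
def fidelity {n : Type*} [Fintype n] [DecidableEq n] (ρ σ : Matrix n n ℂ) : ℝ :=
  ((msqrt (msqrt ρ * σ * msqrt ρ)).trace).re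

/-- Density operator: positive semidefinite with unit trace. -/
def IsDensity {n : Type*} [Fintype n] [DecidableEq n] (ρ : Matrix n n ℂ) : Prop :=
  ρ.PosSemidef ∧ ρ.trace = 1

/-- Inner product `⟨ψ|φ⟩`. -/
def ip {α : Type*} [Fintype α] (ψ φ : α → ℂ) : ℂ := ∑ x, star (ψ x) * φ x

/-- Rank-one projection `|ψ⟩⟨ψ|`. -/
def proj {α : Type*} [Fintype α] (ψ : α → ℂ) : Matrix α α ℂ :=
  Matrix.of fun x y => ψ x * star (ψ y)

/-- Partial trace over the first tensor factor. -/
def ptraceA {A B : Type*} [Fintype A] (M : Matrix (A × B) (A × B) ℂ) : Matrix B B ℂ :=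
  Matrix.of fun i j => ∑ a, M (a, i) (a, j)

/-- `(U ⊗ I_B)` acting on a bipartite vector. -/
def applyA {A B : Type*} [Fintype A] (U : Matrix A A ℂ) (ψ : A × B → ℂ) : A × B → ℂ :=
  fun x => ∑ a', U x.1 a' * ψ (a', x.2)

/-- The "penalized" three-party form
`Σ_i √(p i) |i⟩_E |i⟩_{A'} |i⟩_{B'} |ψ_i⟩_{AB}`, as a vector on
`E-record × A'-record × B'-record × (A × B)`. -/
def pen {I AB : Type*} [DecidableEq I] (p : I → ℝ) (ψ : I → AB → ℂ) :
    I × I × I × AB → ℂ :=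
  fun z => if z.1 = z.2.1 ∧ z.2.1 = z.2.2.1 then
    (Real.sqrt (p z.1) : ℂ) * ψ z.1 z.2.2.2 else 0

/-- The penalized state regrouped as (traced : E-record × A'-record × A) × (kept : B'-record × B). -/
def penB {I A B : Type*} [DecidableEq I] (p : I → ℝ) (ψ : I → A × B → ℂ) :
    (I × I × A) × (I × B) → ℂ :=
  fun x => pen p ψ (x.1.1, x.1.2.1, x.2.1, (x.1.2.2, x.2.2))

/-- The penalized state regrouped as (traced : A'-record × A) × (kept : E-record × B'-record × B). -/
def penEB {I A B : Type*} [DecidableEq I] (p : I → ℝ) (ψ : I → A × B → ℂ) :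
    (I × A) × (I × (I × B)) → ℂ :=
  fun x => pen p ψ (x.2.1, x.1.1, x.2.2.1, (x.1.2, x.2.2.2))


section Aux
open Matrix
open scoped MatrixOrder

lemma msqrt_eq {n : Type*} [Fintype n] [DecidableEq n] {A : Matrix n n ℂ} (h : A.PosSemidef) :
    msqrt A = CFC.sqrt A := by
  rw [msqrt, dif_pos h, CFC.sqrt_eq_real_sqrt A (Matrix.nonneg_iff_posSemidef.mpr h), cfcₙ_eq_cfc,
    h.1.cfc_eq]
  simp [Matrix.IsHermitian.cfc, Unitary.conjStarAlgAut_apply]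

lemma msqrt_posSemidef {n : Type*} [Fintype n] [DecidableEq n] {A : Matrix n n ℂ}
    (h : A.PosSemidef) : (msqrt A).PosSemidef := by
  rw [msqrt_eq h]; exact Matrix.nonneg_iff_posSemidef.mp (CFC.sqrt_nonneg A)

lemma proj_posSemidef {α : Type*} [Fintype α] (ψ : α → ℂ) : (proj ψ).PosSemidef := by
  refine Matrix.posSemidef_iff_dotProduct_mulVec.mpr ⟨?_, ?_⟩
  · ext x y
    simp [proj, Matrix.conjTranspose_apply, mul_comm]
  · intro x
    have h : star x ⬝ᵥ ((proj ψ) *ᵥ x)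
        = (∑ i, star (x i) * ψ i) * star (∑ i, star (x i) * ψ i) := by
      simp only [dotProduct, mulVec, proj, Matrix.of_apply, star_sum, star_mul',
        star_star, Finset.mul_sum, Finset.sum_mul, Pi.star_apply]
      rw [Finset.sum_comm]
      exact Finset.sum_congr rfl fun i _ => Finset.sum_congr rfl fun j _ => by ring
    rw [h]
    exact mul_star_self_nonneg _

lemma ptraceA_posSemidef {A B : Type*} [Fintype A] [Fintype B] {M : Matrix (A × B) (A × B) ℂ}
    (hM : M.PosSemidef) : (ptraceA M).PosSemidef := by
  classical
  refine Matrix.posSemidef_iff_dotProduct_mulVec.mpr ⟨?_, ?_⟩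
  · ext i j
    have h2 : ∀ x y, star (M x y) = M y x := fun x y => by
      conv_rhs => rw [← hM.1]
      simp [Matrix.conjTranspose_apply]
    simp [ptraceA, Matrix.conjTranspose_apply, star_sum, h2]
  · intro x
    set y : A → (A × B) → ℂ := fun a c => if c.1 = a then x c.2 else 0 with hy
    have key : star x ⬝ᵥ (ptraceA M *ᵥ x) = ∑ a : A, star (y a) ⬝ᵥ (M *ᵥ y a) := by
      simp only [dotProduct, mulVec, ptraceA, Matrix.of_apply, Pi.star_apply, hy,
        Fintype.sum_prod_type, apply_ite (star : ℂ → ℂ), star_zero, ite_mul, zero_mul,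
        mul_ite, mul_zero, Finset.sum_ite_irrel, Finset.sum_const_zero,
        Finset.sum_ite_eq', Finset.mem_univ, if_true, Finset.mul_sum, Finset.sum_mul]
      conv_rhs => rw [Finset.sum_comm]
      exact Finset.sum_congr rfl fun i _ => Finset.sum_comm
    rw [key]
    exact Finset.sum_nonneg fun a _ => hM.dotProduct_mulVec_nonneg _

lemma msqrt_conj {n m : Type*} [Fintype n] [DecidableEq n] [Fintype m] [DecidableEq m]
    {A : Matrix n n ℂ} (hA : A.PosSemidef) (V : Matrix m n ℂ) (hV : Vᴴ * V = 1) :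
    msqrt (V * A * Vᴴ) = V * msqrt A * Vᴴ := by
  have hVAV : (V * A * Vᴴ).PosSemidef := hA.mul_mul_conjTranspose_same V
  have hS : (V * msqrt A * Vᴴ).PosSemidef := (msqrt_posSemidef hA).mul_mul_conjTranspose_same V
  have hsq : (V * msqrt A * Vᴴ) ^ 2 = V * A * Vᴴ := by
    rw [pow_two]
    calc V * msqrt A * Vᴴ * (V * msqrt A * Vᴴ)
        = V * msqrt A * (Vᴴ * V) * msqrt A * Vᴴ := by
          simp only [Matrix.mul_assoc]
      _ = V * A * Vᴴ := by
          rw [hV, Matrix.mul_one, msqrt_eq hA, Matrix.mul_assoc V, CFC.sqrt_mul_sqrt_self A (Matrix.nonneg_iff_posSemidef.mpr hA)]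
  rw [msqrt_eq hVAV]
  exact CFC.sqrt_unique (by rw [← pow_two]; exact hsq) (Matrix.nonneg_iff_posSemidef.mpr hS)

lemma fidelity_conj {n m : Type*} [Fintype n] [DecidableEq n] [Fintype m] [DecidableEq m]
    {ρ σ : Matrix n n ℂ} (hρ : ρ.PosSemidef) (hσ : σ.PosSemidef)
    (V : Matrix m n ℂ) (hV : Vᴴ * V = 1) :
    fidelity (V * ρ * Vᴴ) (V * σ * Vᴴ) = fidelity ρ σ := by
  have hcan : ∀ X : Matrix n m ℂ, Vᴴ * (V * X) = X := fun X => by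
    rw [← Matrix.mul_assoc, hV, Matrix.one_mul]
  have hM : (msqrt ρ * σ * msqrt ρ).PosSemidef := by
    have := hσ.conjTranspose_mul_mul_same (msqrt ρ)
    rwa [(msqrt_posSemidef hρ).1.eq] at this
  unfold fidelity
  rw [msqrt_conj hρ V hV]
  have h1 : V * msqrt ρ * Vᴴ * (V * σ * Vᴴ) * (V * msqrt ρ * Vᴴ)
      = V * (msqrt ρ * σ * msqrt ρ) * Vᴴ := by
    simp only [Matrix.mul_assoc, hcan]
  rw [h1, msqrt_conj hM V hV, Matrix.trace_mul_cycle, hV, Matrix.one_mul]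

lemma rhoB_apply {I A B : Type*} [Fintype I] [DecidableEq I] [Fintype A] [Fintype B]
    (p : I → ℝ) (ψ : I → A × B → ℂ) (i j : I) (c d : B) :
    ptraceA (proj (penB p ψ)) (i, c) (j, d)
      = if i = j then (Real.sqrt (p i) : ℂ) * (Real.sqrt (p i) : ℂ) *
          ∑ a, ψ i (a, c) * star (ψ i (a, d)) else 0 := by
  simp only [ptraceA, proj, penB, pen, Matrix.of_apply, Fintype.sum_prod_type]
  simp only [apply_ite (star : ℂ → ℂ), star_zero, ite_and, ite_mul, zero_mul, mul_ite, mul_zero,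
    Finset.sum_ite_irrel, Finset.sum_const_zero, Finset.sum_ite_eq, Finset.sum_ite_eq',
    Finset.mem_univ, if_true, Finset.mul_sum]
  rcases eq_or_ne i j with rfl | h
  · simp only [if_pos rfl]
    exact Finset.sum_congr rfl fun a _ => by
      rw [star_mul', Complex.star_def, Complex.conj_ofReal]; ring
  · simp [h, Ne.symm h]

lemma rhoEB_apply {I A B : Type*} [Fintype I] [DecidableEq I] [Fintype A] [Fintype B]
    (p : I → ℝ) (ψ : I → A × B → ℂ) (e f b' b'' : I) (b d : B) :
    ptraceA (proj (penEB p ψ)) (e, (b', b)) (f, (b'', d))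
      = if e = b' ∧ f = b'' ∧ f = e then (Real.sqrt (p e) : ℂ) * (Real.sqrt (p e) : ℂ) *
          ∑ a, ψ e (a, b) * star (ψ e (a, d)) else 0 := by
  simp only [ptraceA, proj, penEB, pen, Matrix.of_apply, Fintype.sum_prod_type]
  simp only [apply_ite (star : ℂ → ℂ), star_zero, ite_and, ite_mul, zero_mul, mul_ite, mul_zero,
    Finset.sum_ite_irrel, Finset.sum_const_zero, Finset.sum_ite_eq, Finset.sum_ite_eq',
    Finset.mem_univ, if_true, Finset.mul_sum]
  by_cases h1 : f = b'' <;> by_cases h2 : e = f <;> by_cases h3 : f = b' <;>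
      simp_all <;>
    exact Finset.sum_congr rfl fun a _ => by ring

/-- The isometry `|i⟩|c⟩ ↦ |i⟩|i⟩|c⟩`. -/
def isoV (I B : Type*) [DecidableEq I] [DecidableEq B] :
    Matrix (I × (I × B)) (I × B) ℂ :=
  Matrix.of fun x y => if x = (y.1, (y.1, y.2)) then 1 else 0

lemma isoV_isometry {I B : Type*} [Fintype I] [DecidableEq I] [Fintype B] [DecidableEq B] :
    (isoV I B)ᴴ * isoV I B = 1 := by
  ext y y'
  simp only [isoV, Matrix.mul_apply, Matrix.conjTranspose_apply, Matrix.of_apply,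
    apply_ite (star : ℂ → ℂ), star_zero, star_one, ite_mul, zero_mul, one_mul,
    Finset.sum_ite_eq, Finset.mem_univ, if_true, Matrix.one_apply]
  by_cases h : y = y'
  · subst h; simp
  · have : (y.1, (y.1, y.2)) ≠ (y'.1, (y'.1, y'.2)) := by
      simp only [ne_eq, Prod.mk.injEq, not_and]
      intro h1 _; exact fun h2 => h (Prod.ext h1 h2)
    simp [h, this]

lemma conj_rho {I A B : Type*} [Fintype I] [DecidableEq I] [Fintype A] [Fintype B]
    [DecidableEq B] (p : I → ℝ) (ψ : I → A × B → ℂ) :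
    ptraceA (proj (penEB p ψ)) = isoV I B * ptraceA (proj (penB p ψ)) * (isoV I B)ᴴ := by
  ext ⟨e, b', b⟩ ⟨f, b'', d⟩
  rw [rhoEB_apply]
  simp only [Matrix.mul_apply, Matrix.conjTranspose_apply, isoV, Matrix.of_apply,
    Prod.mk.injEq, Fintype.sum_prod_type, rhoB_apply, apply_ite (star : ℂ → ℂ),
    star_zero, star_one, ite_and, ite_mul, zero_mul, one_mul, mul_ite, mul_zero, mul_one,
    Finset.sum_ite_irrel, Finset.sum_const_zero, Finset.sum_ite_eq, Finset.sum_ite_eq',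
    Finset.mem_univ, if_true]
  by_cases h1 : e = b' <;> by_cases h2 : f = b'' <;> by_cases h3 : f = e <;> simp_all <;>
    (try split_ifs) <;> intros <;> simp_all

end Aux

/-- the environment copy of the classical record gives Bob no
additional distinguishing power:
`F(tr_{AE}|Ψ(0)⟩⟨Ψ(0)|, tr_{AE}|Ψ(1)⟩⟨Ψ(1)|) = F(tr_A|Ψ(0)⟩⟨Ψ(0)|, tr_A|Ψ(1)⟩⟨Ψ(1)|)`. -/
theorem environment_record_gives_no_advantage
    {I A B : Type*} [Fintype I] [DecidableEq I] [Fintype A] [DecidableEq A]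
    [Fintype B] [DecidableEq B]
    (p : Bool → I → ℝ) (hp : ∀ b, (∀ i, 0 ≤ p b i) ∧ ∑ i, p b i = 1)
    (ψ : I → Bool → A × B → ℂ) (hψ : ∀ i b, ip (ψ i b) (ψ i b) = 1) :
    fidelity (ptraceA (proj (penB (p false) (fun i => ψ i false))))
             (ptraceA (proj (penB (p true) (fun i => ψ i true))))
      = fidelity (ptraceA (proj (penEB (p false) (fun i => ψ i false))))
                 (ptraceA (proj (penEB (p true) (fun i => ψ i true)))) := by
  have h0 := ptraceA_posSemidef (proj_posSemidef (penB (p false) (fun i => ψ i false)))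
  have h1 := ptraceA_posSemidef (proj_posSemidef (penB (p true) (fun i => ψ i true)))
  rw [conj_rho (p false) (fun i => ψ i false), conj_rho (p true) (fun i => ψ i true)]
  exact (fidelity_conj h0 h1 (isoV I B) isoV_isometry).symm

end QBC
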